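/- Let μᵣ, μₛ be probability measures on Ω, f a labeling function, and h₁, h₂ hypotheses with disagreement sets Ω₁ = {x : h₁(x) ≠ h₂(x) ∧ h₁(x) ≠ f(x)} and Ω₂ = {x : h₁(x) ≠ h₂(x) ∧ h₂(x) ≠ f(x)}. Then |Δεᵣ − Δεₛ| ≤ |μᵣ − μₛ|(Ω₁ ∪ Ω₂) ≤ |μᵣ − μₛ|({x : h₁(x) ≠ h₂(x)}). -/

import Mathlib

open MeasureTheory Set

lemma abs_apply_le_tv {Ω : Type*} [MeasurableSpace Ω] (s : SignedMeasure Ω) {i : Set Ω}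
    (hi : MeasurableSet i) : |s i| ≤ (s.totalVariation i).toReal := by
  conv_lhs => rw [← s.toSignedMeasure_toJordanDecomposition]
  rw [JordanDecomposition.toSignedMeasure, VectorMeasure.sub_apply,
    Measure.toSignedMeasure_apply_measurable hi, Measure.toSignedMeasure_apply_measurable hi,
    SignedMeasure.totalVariation, Measure.add_apply,
    ENNReal.toReal_add (measure_ne_top _ _) (measure_ne_top _ _)]
  have h1 : (0:ℝ) ≤ (s.toJordanDecomposition.posPart i).toReal := ENNReal.toReal_nonneg
  have h2 : (0:ℝ) ≤ (s.toJordanDecomposition.negPart i).toReal := ENNReal.toReal_nonneg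
  rw [abs_sub_le_iff]; simp only [Measure.real]; constructor <;> linarith

theorem risk_diff_gap_bounds {Ω Y : Type*} [MeasurableSpace Ω]
    (μr μs : Measure Ω) [IsProbabilityMeasure μr] [IsProbabilityMeasure μs]
    (f h₁ h₂ : Ω → Y)
    (hm1 : MeasurableSet {x | h₁ x ≠ f x})
    (hm2 : MeasurableSet {x | h₂ x ≠ f x})
    (hm12 : MeasurableSet {x | h₁ x ≠ h₂ x}) :
    |((μr {x | h₂ x ≠ f x}).toReal - (μr {x | h₁ x ≠ f x}).toReal) -
        ((μs {x | h₂ x ≠ f x}).toReal - (μs {x | h₁ x ≠ f x}).toReal)| ≤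
      ((μr.toSignedMeasure - μs.toSignedMeasure).totalVariation
        ({x | h₁ x ≠ h₂ x ∧ h₁ x ≠ f x} ∪ {x | h₁ x ≠ h₂ x ∧ h₂ x ≠ f x})).toReal ∧
    ((μr.toSignedMeasure - μs.toSignedMeasure).totalVariation
        ({x | h₁ x ≠ h₂ x ∧ h₁ x ≠ f x} ∪ {x | h₁ x ≠ h₂ x ∧ h₂ x ≠ f x})).toReal ≤
      ((μr.toSignedMeasure - μs.toSignedMeasure).totalVariation {x | h₁ x ≠ h₂ x}).toReal := by
  set A := {x | h₁ x ≠ f x}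
  set B := {x | h₂ x ≠ f x}
  set ν := μr.toSignedMeasure - μs.toSignedMeasure with hν
  have hΩ₁ : {x | h₁ x ≠ h₂ x ∧ h₁ x ≠ f x} = {x | h₁ x ≠ h₂ x} ∩ A := rfl
  have hΩ₂ : {x | h₁ x ≠ h₂ x ∧ h₂ x ≠ f x} = {x | h₁ x ≠ h₂ x} ∩ B := rfl
  have hmΩ₁ : MeasurableSet ({x | h₁ x ≠ h₂ x} ∩ A) := hm12.inter hm1
  have hmΩ₂ : MeasurableSet ({x | h₁ x ≠ h₂ x} ∩ B) := hm12.inter hm2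
  constructor
  · -- rewrite LHS as ν B - ν A
    have hB : (μr B).toReal - (μs B).toReal = ν B := by
      rw [hν, VectorMeasure.sub_apply, Measure.toSignedMeasure_apply_measurable hm2,
        Measure.toSignedMeasure_apply_measurable hm2]; rfl
    have hA : (μr A).toReal - (μs A).toReal = ν A := by
      rw [hν, VectorMeasure.sub_apply, Measure.toSignedMeasure_apply_measurable hm1,
        Measure.toSignedMeasure_apply_measurable hm1]; rfl
    have hrw : ((μr B).toReal - (μr A).toReal) - ((μs B).toReal - (μs A).toReal)
        = ν B - ν A := by rw [← hB, ← hA]; ring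
    rw [hrw]
    -- ν B = ν (B ∩ A) + ν (B \ A), ν A = ν (A ∩ B) + ν (A \ B)
    haveI : IsFiniteMeasure ν.totalVariation := by
      unfold MeasureTheory.SignedMeasure.totalVariation; infer_instance
    have hBsplit : ν B = ν (B ∩ A) + ν (B \ A) := by
      rw [← ν.of_union
        ((Set.disjoint_sdiff_right (s := A) (t := B)).mono_left Set.inter_subset_right)
        (hm2.inter hm1) (hm2.diff hm1), Set.inter_union_diff]
    have hAsplit : ν A = ν (A ∩ B) + ν (A \ B) := by
      rw [← ν.of_union
        ((Set.disjoint_sdiff_right (s := B) (t := A)).mono_left Set.inter_subset_right)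
        (hm1.inter hm2) (hm1.diff hm2), Set.inter_union_diff]
    have hIC : ν (B ∩ A) = ν (A ∩ B) := by rw [Set.inter_comm]
    have hdiff : ν B - ν A = ν (B \ A) - ν (A \ B) := by
      rw [hBsplit, hAsplit, hIC]; ring
    rw [hdiff]
    have h1 := abs_apply_le_tv ν (hm2.diff hm1)
    have h2 := abs_apply_le_tv ν (hm1.diff hm2)
    have htri : |ν (B \ A) - ν (A \ B)| ≤ |ν (B \ A)| + |ν (A \ B)| := abs_sub _ _
    have hsub1 : B \ A ⊆ {x | h₁ x ≠ h₂ x} ∩ B := by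
      intro x hx
      have hne : h₁ x ≠ h₂ x := by
        intro he
        exact hx.1 (he ▸ (not_not.mp (fun hc => hx.2 hc)))
      exact ⟨hne, hx.1⟩
    have hsub2 : A \ B ⊆ {x | h₁ x ≠ h₂ x} ∩ A := by
      intro x hx
      have hne : h₁ x ≠ h₂ x := by
        intro he
        exact hx.1 (he.symm ▸ (not_not.mp (fun hc => hx.2 hc)))
      exact ⟨hne, hx.1⟩
    have hmono1 : (ν.totalVariation (B \ A)).toReal ≤
        (ν.totalVariation ({x | h₁ x ≠ h₂ x} ∩ A ∪ {x | h₁ x ≠ h₂ x} ∩ B)).toReal :=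
      ENNReal.toReal_mono (measure_ne_top _ _)
        (measure_mono (hsub1.trans Set.subset_union_right))
    have hmono2 : (ν.totalVariation (A \ B)).toReal ≤
        (ν.totalVariation ({x | h₁ x ≠ h₂ x} ∩ A ∪ {x | h₁ x ≠ h₂ x} ∩ B)).toReal := by
      refine ENNReal.toReal_mono (measure_ne_top _ _)
        (measure_mono (hsub2.trans Set.subset_union_left))
    -- additivity over disjoint pieces
    have hdisj : Disjoint (B \ A) (A \ B) := disjoint_sdiff_sdiff
    have hadd : (ν.totalVariation (B \ A)).toReal + (ν.totalVariation (A \ B)).toReal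
        = (ν.totalVariation ((B \ A) ∪ (A \ B))).toReal := by
      rw [measure_union hdisj (hm1.diff hm2),
        ENNReal.toReal_add (measure_ne_top _ _) (measure_ne_top _ _)]
    have hmono : (ν.totalVariation ((B \ A) ∪ (A \ B))).toReal ≤
        (ν.totalVariation ({x | h₁ x ≠ h₂ x} ∩ A ∪ {x | h₁ x ≠ h₂ x} ∩ B)).toReal :=
      ENNReal.toReal_mono (measure_ne_top _ _)
        (measure_mono (Set.union_subset (hsub1.trans Set.subset_union_right)
          (hsub2.trans Set.subset_union_left)))
    rw [hΩ₁, hΩ₂]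
    calc |ν (B \ A) - ν (A \ B)| ≤ |ν (B \ A)| + |ν (A \ B)| := htri
      _ ≤ (ν.totalVariation (B \ A)).toReal + (ν.totalVariation (A \ B)).toReal := by
          exact add_le_add h1 h2
      _ = (ν.totalVariation ((B \ A) ∪ (A \ B))).toReal := hadd
      _ ≤ _ := hmono
  · haveI : IsFiniteMeasure (μr.toSignedMeasure - μs.toSignedMeasure).totalVariation := by
      unfold MeasureTheory.SignedMeasure.totalVariation; infer_instance
    refine ENNReal.toReal_mono (measure_ne_top _ _) (measure_mono ?_)
    rw [hΩ₁, hΩ₂]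
    exact Set.union_subset (Set.inter_subset_left) (Set.inter_subset_left)
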